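/- Let H be a graded connected commutative Hopf algebra over ℚ, let K be the ring of Laurent series, and let T : K → K be a linear projection onto the strictly negative-degree part satisfying the Rota–Baxter identity T(a)T(b) = T(T(a)b) + T(a T(b)) − T(ab). If φ : H → K is an algebra homomorphism, then the map φ₋ defined recursively by φ₋(1) = 1 and φ₋(x) = −T[φ(x) + ∑ φ₋(x')φ(x'')] (sum over the reduced coproduct) is an algebra homomorphism. -/

import Mathlib

open TensorProduct

/-- The image `p ⊗ q` of two submodules inside the tensor product. -/
noncomputable def subTensor {R M N : Type*} [CommRing R] [AddCommGroup M] [Module R M]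
    [AddCommGroup N] [Module R N] (p : Submodule R M) (q : Submodule R N) :
    Submodule R (M ⊗[R] N) :=
  LinearMap.range (TensorProduct.mapIncl p q)

/-- Birkhoff decomposition, negative part: let `H` be a graded connected commutative Hopf
algebra over `ℚ`, `K` a commutative `ℚ`-algebra and `T : K → K` an idempotent linear
Rota–Baxter operator of weight `−1`.  If `φ : H → K` is an algebra homomorphism and
`φ₋ : H → K` is the linear map determined by `φ₋(1) = 1` and the recursion
`φ₋(x) = −T[φ(x) + ∑ φ₋(x')φ(x'')]` (sum over the reduced coproduct
`Δ'(x) = Δ(x) − x⊗1 − 1⊗x`) for homogeneous `x` of positive degree, then `φ₋` is an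
algebra homomorphism. -/
theorem subTensor_induction {R M N : Type*} [CommRing R] [AddCommGroup M] [Module R M]
    [AddCommGroup N] [Module R N] (p : Submodule R M) (q : Submodule R N)
    {P : M ⊗[R] N → Prop} (h0 : P 0) (hadd : ∀ a b, P a → P b → P (a + b))
    (htmul : ∀ x ∈ p, ∀ y ∈ q, P (x ⊗ₜ[R] y)) :
    ∀ w ∈ subTensor p q, P w := by
  rintro w ⟨u, rfl⟩
  induction u using TensorProduct.induction_on with
  | zero => simpa using h0
  | tmul a b => simpa [TensorProduct.mapIncl] using htmul a a.2 b b.2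
  | add a b ha hb => rw [map_add]; exact hadd _ _ ha hb

theorem biSup_induction {R M : Type*} [CommRing R] [AddCommGroup M] [Module R M]
    {ι : Type*} (s : Finset ι) (f : ι → Submodule R M) {P : M → Prop}
    (h0 : P 0) (hadd : ∀ a b, P a → P b → P (a + b))
    (helem : ∀ i ∈ s, ∀ x ∈ f i, P x) :
    ∀ w ∈ ⨆ i ∈ s, f i, P w := by
  intro w hw
  refine Submodule.iSup_induction (motive := P) (fun i => ⨆ _ : i ∈ s, f i) hw ?_ h0 hadd
  intro i x hx
  by_cases hi : i ∈ s
  · simp only [iSup_pos hi] at hx; exact helem i hi x hx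
  · simp only [iSup_neg hi, Submodule.mem_bot] at hx; simpa [hx] using h0

theorem mem_subTensor_one_left {R A : Type*} [CommRing R] [CommRing A] [Algebra R A]
    (q : Submodule R A) (a : A ⊗[R] A)
    (ha : a ∈ subTensor (Submodule.span R {(1 : A)}) q) :
    ∃ z ∈ q, a = 1 ⊗ₜ[R] z := by
  refine subTensor_induction (P := fun a => ∃ z ∈ q, a = 1 ⊗ₜ[R] z) _ _ ?_ ?_ ?_ a ha
  · exact ⟨0, q.zero_mem, (TensorProduct.tmul_zero _ _).symm⟩
  · rintro _ _ ⟨z1, hz1, rfl⟩ ⟨z2, hz2, rfl⟩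
    exact ⟨z1 + z2, q.add_mem hz1 hz2, (TensorProduct.tmul_add _ _ _).symm⟩
  · intro x hx y hy
    obtain ⟨c, rfl⟩ := Submodule.mem_span_singleton.mp hx
    exact ⟨c • y, q.smul_mem c hy, by rw [smul_tmul]⟩

theorem mem_subTensor_one_right {R A : Type*} [CommRing R] [CommRing A] [Algebra R A]
    (q : Submodule R A) (a : A ⊗[R] A)
    (ha : a ∈ subTensor q (Submodule.span R {(1 : A)})) :
    ∃ z ∈ q, a = z ⊗ₜ[R] 1 := by
  refine subTensor_induction (P := fun a => ∃ z ∈ q, a = z ⊗ₜ[R] 1) _ _ ?_ ?_ ?_ a ha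
  · exact ⟨0, q.zero_mem, (TensorProduct.zero_tmul _ _).symm⟩
  · rintro _ _ ⟨z1, hz1, rfl⟩ ⟨z2, hz2, rfl⟩
    exact ⟨z1 + z2, q.add_mem hz1 hz2, (TensorProduct.add_tmul _ _ _).symm⟩
  · intro x hx y hy
    obtain ⟨c, rfl⟩ := Submodule.mem_span_singleton.mp hy
    exact ⟨c • x, q.smul_mem c hx, by rw [← smul_tmul]⟩

theorem reduced_comul_mem {H : Type*} [CommRing H] [HopfAlgebra ℚ H]
    (ℬ : ℕ → Submodule ℚ H) [GradedAlgebra ℬ]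
    (hconn : ℬ 0 = Submodule.span ℚ {(1 : H)})
    (hΔ : ∀ n : ℕ, ∀ x ∈ ℬ n, Coalgebra.comul (R := ℚ) x ∈
      ⨆ k ∈ Finset.range (n + 1), subTensor (ℬ k) (ℬ (n - k)))
    (n : ℕ) (hn : 0 < n) (x : H) (hx : x ∈ ℬ n) :
    Coalgebra.comul (R := ℚ) x - x ⊗ₜ[ℚ] 1 - 1 ⊗ₜ[ℚ] x ∈
      ⨆ k ∈ Finset.Ioo 0 n, subTensor (ℬ k) (ℬ (n - k)) := by
  set W : Submodule ℚ (H ⊗[ℚ] H) := ⨆ k ∈ Finset.Ioo 0 n, subTensor (ℬ k) (ℬ (n - k)) with hW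
  -- split the coproduct
  have hle : (⨆ k ∈ Finset.range (n + 1), subTensor (ℬ k) (ℬ (n - k))) ≤
      subTensor (ℬ 0) (ℬ n) ⊔ (subTensor (ℬ n) (ℬ 0) ⊔ W) := by
    refine iSup₂_le fun k hk => ?_
    rcases eq_or_ne k 0 with rfl | hk0
    · simpa using le_sup_left
    rcases eq_or_ne k n with rfl | hkn
    · simpa using le_sup_of_le_right le_sup_left
    · refine le_sup_of_le_right (le_sup_of_le_right ?_)
      have hk' : k ∈ Finset.Ioo 0 n := by
        simp only [Finset.mem_range] at hk
        exact Finset.mem_Ioo.mpr ⟨Nat.pos_of_ne_zero hk0, by omega⟩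
      exact le_biSup (fun k => subTensor (ℬ k) (ℬ (n - k))) hk'
  obtain ⟨a, ha, r, hr, hsum⟩ := Submodule.mem_sup.mp (hle (hΔ n x hx))
  obtain ⟨b, hb, w, hwmem, hsum2⟩ := Submodule.mem_sup.mp hr
  rw [hconn] at ha hb
  obtain ⟨z, hz, rfl⟩ := mem_subTensor_one_left _ a ha
  obtain ⟨z', hz', rfl⟩ := mem_subTensor_one_right _ b hb
  -- counit maps
  set ε : H →ₗ[ℚ] ℚ := Coalgebra.counit (R := ℚ) with hε
  set E : H ⊗[ℚ] H →ₗ[ℚ] H :=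
    (TensorProduct.lid ℚ H).toLinearMap ∘ₗ LinearMap.rTensor H ε with hE
  set E' : H ⊗[ℚ] H →ₗ[ℚ] H :=
    (TensorProduct.rid ℚ H).toLinearMap ∘ₗ LinearMap.lTensor H ε with hE'
  have hEtmul : ∀ u v : H, E (u ⊗ₜ[ℚ] v) = ε u • v := by
    intro u v; simp [hE]
  have hE'tmul : ∀ u v : H, E' (u ⊗ₜ[ℚ] v) = ε v • u := by
    intro u v; simp [hE']
  have hEc : E (Coalgebra.comul (R := ℚ) x) = x := by
    simp [hE, hε, Coalgebra.rTensor_counit_comul]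
  have hE'c : E' (Coalgebra.comul (R := ℚ) x) = x := by
    simp [hE', hε, Coalgebra.lTensor_counit_comul]
  set U : Submodule ℚ H := ⨆ (j) (_ : j ≠ n), ℬ j with hU
  have hmemU : ∀ j, j ≠ n → ∀ u ∈ ℬ j, u ∈ U := by
    intro j hj u hu
    have hle : ℬ j ≤ U := le_iSup_of_le j (le_iSup_of_le hj (le_refl (ℬ j)))
    exact hle hu
  have hdisj : ∀ u ∈ ℬ n, u ∈ U → u = 0 := by
    intro u h1 h2
    have hind := (DirectSum.Decomposition.isInternal ℬ).submodule_iSupIndep n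
    exact Submodule.disjoint_def.mp hind u h1 h2
  have hEwU : E w ∈ U := by
    refine biSup_induction (P := fun t => E t ∈ U) _ _ ?_ ?_ ?_ w hwmem
    · simp only [map_zero]; exact U.zero_mem
    · intro a b ha hb; rw [map_add]; exact U.add_mem ha hb
    · intro k hk
      refine subTensor_induction (P := fun t => E t ∈ U) _ _ ?_ ?_ ?_
      · simp only [map_zero]; exact U.zero_mem
      · intro a b ha hb; rw [map_add]; exact U.add_mem ha hb
      · intro u hu v hv
        rw [hEtmul]
        obtain ⟨h1, h2⟩ := Finset.mem_Ioo.mp hk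
        exact hmemU (n - k) (by omega) _ ((ℬ (n - k)).smul_mem _ hv)
  have hE'wU : E' w ∈ U := by
    refine biSup_induction (P := fun t => E' t ∈ U) _ _ ?_ ?_ ?_ w hwmem
    · simp only [map_zero]; exact U.zero_mem
    · intro a b ha hb; rw [map_add]; exact U.add_mem ha hb
    · intro k hk
      refine subTensor_induction (P := fun t => E' t ∈ U) _ _ ?_ ?_ ?_
      · simp only [map_zero]; exact U.zero_mem
      · intro a b ha hb; rw [map_add]; exact U.add_mem ha hb
      · intro u hu v hv
        rw [hE'tmul]
        obtain ⟨h1, h2⟩ := Finset.mem_Ioo.mp hk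
        exact hmemU k (by omega) _ ((ℬ k).smul_mem _ hu)
  have hone : (1 : H) ∈ ℬ 0 := by
    rw [hconn]; exact Submodule.mem_span_singleton_self 1
  -- identify z = x
  have hzx : z = x := by
    have hxe : x = z + (ε z' • 1 + E w) := by
      have := congrArg E hsum
      rw [hEc, ← hsum2, map_add, map_add, hEtmul, hEtmul] at this
      rw [← this]
      have : ε (1 : H) = 1 := Bialgebra.counit_one (R := ℚ) (A := H)
      rw [this, one_smul]
    have h0 : x - z ∈ ℬ n := Submodule.sub_mem _ hx hz
    have h1 : x - z ∈ U := by
      rw [hxe]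
      have : z + (ε z' • 1 + E w) - z = ε z' • 1 + E w := by ring
      rw [this]
      exact U.add_mem (hmemU 0 (by omega) _ ((ℬ 0).smul_mem _ hone)) hEwU
    have := hdisj _ h0 h1
    have : z = x := by linear_combination -this
    exact this
  have hz'x : z' = x := by
    have hxe : x = z' + (ε z • 1 + E' w) := by
      have := congrArg E' hsum
      rw [hE'c, ← hsum2, map_add, map_add, hE'tmul, hE'tmul] at this
      rw [← this]
      have h1 : ε (1 : H) = 1 := Bialgebra.counit_one (R := ℚ) (A := H)
      rw [h1, one_smul]
      ring
    have h0 : x - z' ∈ ℬ n := Submodule.sub_mem _ hx hz'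
    have h1 : x - z' ∈ U := by
      rw [hxe]
      have : z' + (ε z • 1 + E' w) - z' = ε z • 1 + E' w := by ring
      rw [this]
      exact U.add_mem (hmemU 0 (by omega) _ ((ℬ 0).smul_mem _ hone)) hE'wU
    have := hdisj _ h0 h1
    have : z' = x := by linear_combination -this
    exact this
  rw [hz'x] at hsum2
  rw [hzx] at hsum
  have : Coalgebra.comul (R := ℚ) x - x ⊗ₜ[ℚ] 1 - 1 ⊗ₜ[ℚ] x = w := by
    rw [← hsum, ← hsum2]; ring
  rw [this]
  exact hwmem

theorem birkhoff_counterterm_is_algebra_hom {H K : Type*} [CommRing H] [HopfAlgebra ℚ H]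
    (ℬ : ℕ → Submodule ℚ H) [GradedAlgebra ℬ]
    (hconn : ℬ 0 = Submodule.span ℚ {(1 : H)})
    (hΔ : ∀ n : ℕ, ∀ x ∈ ℬ n, Coalgebra.comul (R := ℚ) x ∈
      ⨆ k ∈ Finset.range (n + 1), subTensor (ℬ k) (ℬ (n - k)))
    [CommRing K] [Algebra ℚ K] (T : K →ₗ[ℚ] K)
    (hTidem : ∀ a : K, T (T a) = T a)
    (hTRB : ∀ a b : K, T a * T b + T (a * b) = T (T a * b) + T (a * T b))
    (φ : H →ₐ[ℚ] K) (φm : H →ₗ[ℚ] K) (hφm1 : φm 1 = 1)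
    (hrec : ∀ n : ℕ, 0 < n → ∀ x ∈ ℬ n,
      φm x = -T (φ x +
        (LinearMap.mul' ℚ K ∘ₗ TensorProduct.map φm φ.toLinearMap)
          (Coalgebra.comul (R := ℚ) x - x ⊗ₜ[ℚ] 1 - 1 ⊗ₜ[ℚ] x))) :
    ∀ x y : H, φm (x * y) = φm x * φm y := by
  set Ψ : H ⊗[ℚ] H →ₗ[ℚ] K := LinearMap.mul' ℚ K ∘ₗ TensorProduct.map φm φ.toLinearMap
    with hΨ
  have Ψtmul : ∀ a b : H, Ψ (a ⊗ₜ[ℚ] b) = φm a * φ b := by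
    intro a b; simp [hΨ, LinearMap.mul'_apply]
  -- degree-zero cases
  have hzl : ∀ x ∈ ℬ 0, ∀ y : H, φm (x * y) = φm x * φm y := by
    intro x hx y
    rw [hconn] at hx
    obtain ⟨c, rfl⟩ := Submodule.mem_span_singleton.mp hx
    rw [smul_mul_assoc, one_mul, map_smul, map_smul, hφm1, smul_mul_assoc, one_mul]
  have hzr : ∀ y ∈ ℬ 0, ∀ x : H, φm (x * y) = φm x * φm y := by
    intro y hy x
    rw [hconn] at hy
    obtain ⟨c, rfl⟩ := Submodule.mem_span_singleton.mp hy
    rw [mul_smul_comm, mul_one, map_smul, map_smul, hφm1, mul_smul_comm, mul_one]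
  -- main induction on total degree
  have key : ∀ N : ℕ, ∀ n m : ℕ, n + m ≤ N → ∀ x ∈ ℬ n, ∀ y ∈ ℬ m,
      φm (x * y) = φm x * φm y := by
    intro N
    induction N with
    | zero =>
      intro n m hnm x hx y hy
      have hn : n = 0 := by omega
      subst hn
      exact hzl x hx y
    | succ N IH =>
      intro n m hnm x hx y hy
      rcases Nat.eq_zero_or_pos n with rfl | hn
      · exact hzl x hx y
      rcases Nat.eq_zero_or_pos m with rfl | hm
      · exact hzr y hy x
      rcases Nat.lt_or_ge (n + m) (N + 1) with hlt | hge
      · exact IH n m (by omega) x hx y hy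
      have IH' : ∀ a b : ℕ, a + b < n + m → ∀ u ∈ ℬ a, ∀ v ∈ ℬ b,
          φm (u * v) = φm u * φm v := fun a b h => IH a b (by omega)
      -- reduced coproducts
      set w : H ⊗[ℚ] H := Coalgebra.comul (R := ℚ) x - x ⊗ₜ[ℚ] 1 - 1 ⊗ₜ[ℚ] x with hw
      set v : H ⊗[ℚ] H := Coalgebra.comul (R := ℚ) y - y ⊗ₜ[ℚ] 1 - 1 ⊗ₜ[ℚ] y with hv
      have hwmem : w ∈ ⨆ k ∈ Finset.Ioo 0 n, subTensor (ℬ k) (ℬ (n - k)) :=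
        reduced_comul_mem ℬ hconn hΔ n hn x hx
      have hvmem : v ∈ ⨆ k ∈ Finset.Ioo 0 m, subTensor (ℬ k) (ℬ (m - k)) :=
        reduced_comul_mem ℬ hconn hΔ m hm y hy
      -- sub-lemmas
      have S1 : ∀ v' ∈ ⨆ k ∈ Finset.Ioo 0 m, subTensor (ℬ k) (ℬ (m - k)),
          Ψ ((x ⊗ₜ[ℚ] 1) * v') = φm x * Ψ v' := by
        refine biSup_induction (P := fun t => Ψ ((x ⊗ₜ[ℚ] 1) * t) = φm x * Ψ t) _ _ ?_ ?_ ?_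
        · simp
        · intro a b ha hb; rw [mul_add, map_add, map_add, mul_add, ha, hb]
        · intro j hj
          refine subTensor_induction (P := fun t => Ψ ((x ⊗ₜ[ℚ] 1) * t) = φm x * Ψ t)
            _ _ ?_ ?_ ?_
          · simp
          · intro a b ha hb; rw [mul_add, map_add, map_add, mul_add, ha, hb]
          · intro y' hy' y'' hy''
            obtain ⟨hj1, hj2⟩ := Finset.mem_Ioo.mp hj
            rw [Algebra.TensorProduct.tmul_mul_tmul, one_mul, Ψtmul, Ψtmul,
              IH' n j (by omega) x hx y' hy', mul_assoc]
      have S2 : ∀ v' ∈ ⨆ k ∈ Finset.Ioo 0 m, subTensor (ℬ k) (ℬ (m - k)),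
          Ψ ((1 ⊗ₜ[ℚ] x) * v') = φ x * Ψ v' := by
        refine biSup_induction (P := fun t => Ψ ((1 ⊗ₜ[ℚ] x) * t) = φ x * Ψ t) _ _ ?_ ?_ ?_
        · simp
        · intro a b ha hb; rw [mul_add, map_add, map_add, mul_add, ha, hb]
        · intro j hj
          refine subTensor_induction (P := fun t => Ψ ((1 ⊗ₜ[ℚ] x) * t) = φ x * Ψ t)
            _ _ ?_ ?_ ?_
          · simp
          · intro a b ha hb; rw [mul_add, map_add, map_add, mul_add, ha, hb]
          · intro y' hy' y'' hy''
            rw [Algebra.TensorProduct.tmul_mul_tmul, one_mul, Ψtmul, Ψtmul, map_mul]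
            ring
      have S3 : ∀ w' ∈ ⨆ k ∈ Finset.Ioo 0 n, subTensor (ℬ k) (ℬ (n - k)),
          Ψ (w' * (y ⊗ₜ[ℚ] 1)) = Ψ w' * φm y := by
        refine biSup_induction (P := fun t => Ψ (t * (y ⊗ₜ[ℚ] 1)) = Ψ t * φm y) _ _ ?_ ?_ ?_
        · simp
        · intro a b ha hb; rw [add_mul, map_add, map_add, add_mul, ha, hb]
        · intro k hk
          refine subTensor_induction (P := fun t => Ψ (t * (y ⊗ₜ[ℚ] 1)) = Ψ t * φm y)
            _ _ ?_ ?_ ?_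
          · simp
          · intro a b ha hb; rw [add_mul, map_add, map_add, add_mul, ha, hb]
          · intro x' hx' x'' hx''
            obtain ⟨hk1, hk2⟩ := Finset.mem_Ioo.mp hk
            rw [Algebra.TensorProduct.tmul_mul_tmul, mul_one, Ψtmul, Ψtmul,
              IH' k m (by omega) x' hx' y hy]
            ring
      have S4 : ∀ w' ∈ ⨆ k ∈ Finset.Ioo 0 n, subTensor (ℬ k) (ℬ (n - k)),
          Ψ (w' * (1 ⊗ₜ[ℚ] y)) = Ψ w' * φ y := by
        refine biSup_induction (P := fun t => Ψ (t * (1 ⊗ₜ[ℚ] y)) = Ψ t * φ y) _ _ ?_ ?_ ?_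
        · simp
        · intro a b ha hb; rw [add_mul, map_add, map_add, add_mul, ha, hb]
        · intro k hk
          refine subTensor_induction (P := fun t => Ψ (t * (1 ⊗ₜ[ℚ] y)) = Ψ t * φ y)
            _ _ ?_ ?_ ?_
          · simp
          · intro a b ha hb; rw [add_mul, map_add, map_add, add_mul, ha, hb]
          · intro x' hx' x'' hx''
            rw [Algebra.TensorProduct.tmul_mul_tmul, mul_one, Ψtmul, Ψtmul, map_mul]
            ring
      have S5 : ∀ w' ∈ ⨆ k ∈ Finset.Ioo 0 n, subTensor (ℬ k) (ℬ (n - k)),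
          ∀ v' ∈ ⨆ k ∈ Finset.Ioo 0 m, subTensor (ℬ k) (ℬ (m - k)),
          Ψ (w' * v') = Ψ w' * Ψ v' := by
        refine biSup_induction
          (P := fun t => ∀ v' ∈ ⨆ k ∈ Finset.Ioo 0 m, subTensor (ℬ k) (ℬ (m - k)),
            Ψ (t * v') = Ψ t * Ψ v') _ _ ?_ ?_ ?_
        · intro v' hv'; simp
        · intro a b ha hb v' hv'
          rw [add_mul, map_add, map_add, add_mul, ha v' hv', hb v' hv']
        · intro k hk
          refine subTensor_induction
            (P := fun t => ∀ v' ∈ ⨆ k ∈ Finset.Ioo 0 m, subTensor (ℬ k) (ℬ (m - k)),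
              Ψ (t * v') = Ψ t * Ψ v') _ _ ?_ ?_ ?_
          · intro v' hv'; simp
          · intro a b ha hb v' hv'
            rw [add_mul, map_add, map_add, add_mul, ha v' hv', hb v' hv']
          · intro x' hx' x'' hx''
            refine biSup_induction
              (P := fun t => Ψ ((x' ⊗ₜ[ℚ] x'') * t) = Ψ (x' ⊗ₜ[ℚ] x'') * Ψ t) _ _ ?_ ?_ ?_
            · simp
            · intro a b ha hb; rw [mul_add, map_add, map_add, mul_add, ha, hb]
            · intro j hj
              refine subTensor_induction
                (P := fun t => Ψ ((x' ⊗ₜ[ℚ] x'') * t) = Ψ (x' ⊗ₜ[ℚ] x'') * Ψ t) _ _ ?_ ?_ ?_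
              · simp
              · intro a b ha hb; rw [mul_add, map_add, map_add, mul_add, ha, hb]
              · intro y' hy' y'' hy''
                obtain ⟨hk1, hk2⟩ := Finset.mem_Ioo.mp hk
                obtain ⟨hj1, hj2⟩ := Finset.mem_Ioo.mp hj
                rw [Algebra.TensorProduct.tmul_mul_tmul, Ψtmul, Ψtmul, Ψtmul,
                  IH' k j (by omega) x' hx' y' hy', map_mul]
                ring
      -- expansion of the reduced coproduct of x*y
      have hdx : Coalgebra.comul (R := ℚ) x = x ⊗ₜ[ℚ] 1 + 1 ⊗ₜ[ℚ] x + w := by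
        rw [hw]; ring
      have hdy : Coalgebra.comul (R := ℚ) y = y ⊗ₜ[ℚ] 1 + 1 ⊗ₜ[ℚ] y + v := by
        rw [hv]; ring
      have h1 : (x ⊗ₜ[ℚ] 1) * (y ⊗ₜ[ℚ] 1) = (x * y) ⊗ₜ[ℚ] (1 : H) := by
        rw [Algebra.TensorProduct.tmul_mul_tmul, one_mul]
      have h2 : (x ⊗ₜ[ℚ] 1) * (1 ⊗ₜ[ℚ] y) = x ⊗ₜ[ℚ] y := by
        rw [Algebra.TensorProduct.tmul_mul_tmul, one_mul, mul_one]
      have h3 : (1 ⊗ₜ[ℚ] x) * (y ⊗ₜ[ℚ] 1) = y ⊗ₜ[ℚ] x := by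
        rw [Algebra.TensorProduct.tmul_mul_tmul, one_mul, mul_one]
      have h4 : (1 ⊗ₜ[ℚ] x) * (1 ⊗ₜ[ℚ] y) = (1 : H) ⊗ₜ[ℚ] (x * y) := by
        rw [Algebra.TensorProduct.tmul_mul_tmul, one_mul]
      have hΔxy : Coalgebra.comul (R := ℚ) (x * y) - (x * y) ⊗ₜ[ℚ] 1 - 1 ⊗ₜ[ℚ] (x * y)
          = x ⊗ₜ[ℚ] y + y ⊗ₜ[ℚ] x + (x ⊗ₜ[ℚ] 1) * v + (1 ⊗ₜ[ℚ] x) * v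
            + w * (y ⊗ₜ[ℚ] 1) + w * (1 ⊗ₜ[ℚ] y) + w * v := by
        rw [Bialgebra.comul_mul, hdx, hdy]
        linear_combination h1 + h2 + h3 + h4
      -- the recursion at x, y, x*y
      have hxmul : x * y ∈ ℬ (n + m) := SetLike.mul_mem_graded hx hy
      set A : K := φ x + Ψ w with hA
      set B : K := φ y + Ψ v with hB
      have hφmx : φm x = -T A := by rw [hA]; exact hrec n hn x hx
      have hφmy : φm y = -T B := by rw [hB]; exact hrec m hm y hy
      have hφmxy : φm (x * y) = -T (φ (x * y) + Ψ (Coalgebra.comul (R := ℚ) (x * y)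
          - (x * y) ⊗ₜ[ℚ] 1 - 1 ⊗ₜ[ℚ] (x * y))) := hrec (n + m) (by omega) _ hxmul
      have hΨsum : φ (x * y) + Ψ (x ⊗ₜ[ℚ] y + y ⊗ₜ[ℚ] x + (x ⊗ₜ[ℚ] 1) * v + (1 ⊗ₜ[ℚ] x) * v
          + w * (y ⊗ₜ[ℚ] 1) + w * (1 ⊗ₜ[ℚ] y) + w * v)
          = φm x * B + A * φm y + A * B := by
        rw [map_add, map_add, map_add, map_add, map_add, map_add,
          S1 v hvmem, S2 v hvmem, S3 w hwmem, S4 w hwmem, S5 w hwmem v hvmem,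
          Ψtmul, Ψtmul, map_mul, hA, hB]
        ring
      rw [hφmxy, hΔxy, hΨsum, hφmx, hφmy]
      have e1 : (-T A) * B + A * (-T B) + A * B = A * B - (T A * B + A * T B) := by ring
      rw [e1, map_sub, map_add]
      linear_combination -hTRB A B
  -- extend by linearity
  have htop : (⨆ i, ℬ i) = ⊤ :=
    (DirectSum.Decomposition.isInternal ℬ).submodule_iSup_eq_top
  have stepA : ∀ n : ℕ, ∀ x ∈ ℬ n, ∀ y : H, φm (x * y) = φm x * φm y := by
    intro n x hx y
    have hy : y ∈ ⨆ i, ℬ i := by rw [htop]; exact Submodule.mem_top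
    refine Submodule.iSup_induction (motive := fun y => φm (x * y) = φm x * φm y) ℬ hy ?_ ?_ ?_
    · intro m y' hy'
      exact key (n + m) n m le_rfl x hx y' hy'
    · simp
    · intro a b ha hb
      rw [mul_add, map_add, ha, hb, map_add, mul_add]
  intro x y
  have hx : x ∈ ⨆ i, ℬ i := by rw [htop]; exact Submodule.mem_top
  refine Submodule.iSup_induction (motive := fun x => φm (x * y) = φm x * φm y) ℬ hx ?_ ?_ ?_
  · intro n x' hx'
    exact stepA n x' hx' y
  · simp
  · intro a b ha hb
    rw [add_mul, map_add, ha, hb, map_add, add_mul]
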